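/- Let a > 0, b > 0, c > 0, and let p* > 0 be the unique positive root of N(p) = a·(1 + c·p)·ln(1 + c·p) − c·(a·p + b). Then the function f(p) = (a·p + b)/log₂(1 + c·p) is strictly decreasing on (0, p*] and strictly increasing on [p*, ∞); consequently f attains a strict global minimum on (0, ∞) at p*, i.e. f(p) > f(p*) for every p > 0 with p ≠ p*. -/

import Mathlib

open Real Set

/-- if `p* > 0` is the positive root of
`N(p) = a·(1 + c·p)·ln(1 + c·p) − c·(a·p + b)`, then
`f(p) = (a·p + b)/log₂(1 + c·p)` is strictly decreasing on `(0, p*]`, strictly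
increasing on `[p*, ∞)`, and attains a strict global minimum on `(0, ∞)` at `p*`. -/
theorem stmt_3 (a b c : ℝ) (ha : 0 < a) (hb : 0 < b) (hc : 0 < c)
    (pstar : ℝ) (hpstar : 0 < pstar)
    (hroot : a * (1 + c * pstar) * Real.log (1 + c * pstar)
        - c * (a * pstar + b) = 0) :
    StrictAntiOn (fun p : ℝ => (a * p + b) / Real.logb 2 (1 + c * p))
        (Set.Ioc 0 pstar) ∧
    StrictMonoOn (fun p : ℝ => (a * p + b) / Real.logb 2 (1 + c * p))
        (Set.Ici pstar) ∧
    ∀ p : ℝ, 0 < p → p ≠ pstar →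
      (a * pstar + b) / Real.logb 2 (1 + c * pstar) <
        (a * p + b) / Real.logb 2 (1 + c * p) := by
  have hl2 : (0:ℝ) < Real.log 2 := Real.log_pos (by norm_num)
  set N : ℝ → ℝ := fun p => a * (1 + c * p) * Real.log (1 + c * p) - c * (a * p + b)
    with hNdef
  set G : ℝ → ℝ := fun p => (a * p + b) * Real.log 2 / Real.log (1 + c * p) with hGdef
  have hFG : (fun p : ℝ => (a * p + b) / Real.logb 2 (1 + c * p)) = G := by
    funext p
    rw [hGdef, Real.logb, div_div_eq_mul_div]
  -- basic facts
  have hs : ∀ p : ℝ, 0 < p → (1:ℝ) < 1 + c * p := fun p hp => by nlinarith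
  have hs0 : ∀ p : ℝ, 0 < p → (0:ℝ) < 1 + c * p := fun p hp => by nlinarith
  have hL : ∀ p : ℝ, 0 < p → 0 < Real.log (1 + c * p) :=
    fun p hp => Real.log_pos (hs p hp)
  -- derivative of N
  have hderivN : ∀ p : ℝ, 0 < p →
      HasDerivAt N (a * c * Real.log (1 + c * p)) p := by
    intro p hp
    have h1 : HasDerivAt (fun q : ℝ => 1 + c * q) c p := by
      simpa using ((hasDerivAt_id p).const_mul c).const_add 1
    have hlog : HasDerivAt (fun q : ℝ => Real.log (1 + c * q)) (c / (1 + c * p)) p :=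
      h1.log (ne_of_gt (hs0 p hp))
    have h2 : HasDerivAt (fun q : ℝ => a * (1 + c * q)) (a * c) p := h1.const_mul a
    have h3 := (h2.mul hlog).sub (((hasDerivAt_id p).const_mul a |>.add_const b).const_mul c)
    convert h3 using 1
    · rfl
    · rfl
    · rfl
    have hsne : (1 + c * p) ≠ 0 := ne_of_gt (hs0 p hp)
    field_simp
    ring
  have hNcont : ContinuousOn N (Ici 0) := by
    apply ContinuousOn.sub
    · exact (continuousOn_const.mul (by fun_prop)).mul
        (ContinuousOn.log (by fun_prop)
          (fun x hx => by simp only [mem_Ici] at hx; positivity))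
    · fun_prop
  have hNmono : StrictMonoOn N (Ici 0) := by
    apply strictMonoOn_of_deriv_pos (convex_Ici 0) hNcont
    intro p hp
    rw [interior_Ici] at hp
    rw [(hderivN p hp).deriv]
    have := hL p hp
    positivity
  have hNneg : ∀ p : ℝ, 0 < p → p < pstar → N p < 0 := by
    intro p hp hlt
    have := hNmono (le_of_lt hp) (le_of_lt hpstar) hlt
    simpa [hNdef, hroot] using this
  have hNpos : ∀ p : ℝ, pstar < p → 0 < N p := by
    intro p hlt
    have := hNmono (le_of_lt hpstar) (le_of_lt (hpstar.trans hlt)) hlt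
    simpa [hNdef, hroot] using this
  -- derivative of G
  have hderivG : ∀ p : ℝ, 0 < p →
      HasDerivAt G (Real.log 2 * N p / ((1 + c * p) * (Real.log (1 + c * p))^2)) p := by
    intro p hp
    have h1 : HasDerivAt (fun q : ℝ => 1 + c * q) c p := by
      simpa using ((hasDerivAt_id p).const_mul c).const_add 1
    have hlog : HasDerivAt (fun q : ℝ => Real.log (1 + c * q)) (c / (1 + c * p)) p :=
      h1.log (ne_of_gt (hs0 p hp))
    have hu : HasDerivAt (fun q : ℝ => (a * q + b) * Real.log 2) (a * Real.log 2) p := by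
      simpa using ((hasDerivAt_id p).const_mul a |>.add_const b).mul_const (Real.log 2)
    have h3 := hu.div hlog (ne_of_gt (hL p hp))
    convert h3 using 1
    · rfl
    · rfl
    · rfl
    have hsne : (1 + c * p) ≠ 0 := ne_of_gt (hs0 p hp)
    have hLne : Real.log (1 + c * p) ≠ 0 := ne_of_gt (hL p hp)
    field_simp [hNdef]
    ring
  have hGcont : ContinuousOn G {p : ℝ | 0 < p} := by
    apply ContinuousOn.div
    · fun_prop
    · exact ContinuousOn.log (by fun_prop)
        (fun x hx => ne_of_gt (hs0 x hx))
    · exact fun x hx => ne_of_gt (hL x hx)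
  have hanti : StrictAntiOn G (Ioc 0 pstar) := by
    apply strictAntiOn_of_deriv_neg (convex_Ioc 0 pstar)
      (hGcont.mono (fun x hx => hx.1))
    intro p hp
    rw [interior_Ioc] at hp
    rw [(hderivG p hp.1).deriv]
    have hN' := hNneg p hp.1 hp.2
    have hd : 0 < (1 + c * p) * (Real.log (1 + c * p))^2 := by
      have := hL p hp.1
      have := hs0 p hp.1
      positivity
    exact div_neg_of_neg_of_pos (by nlinarith) hd
  have hmono : StrictMonoOn G (Ici pstar) := by
    apply strictMonoOn_of_deriv_pos (convex_Ici pstar)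
      (hGcont.mono (fun x hx => lt_of_lt_of_le hpstar hx))
    intro p hp
    rw [interior_Ici] at hp
    have hp0 : 0 < p := hpstar.trans hp
    rw [(hderivG p hp0).deriv]
    have hN' := hNpos p hp
    have hd : 0 < (1 + c * p) * (Real.log (1 + c * p))^2 := by
      have := hL p hp0
      have := hs0 p hp0
      positivity
    exact div_pos (by nlinarith) hd
  have hpt : ∀ q : ℝ, (a * q + b) / Real.logb 2 (1 + c * q) = G q :=
    fun q => congrFun hFG q
  refine ⟨by rw [hFG]; exact hanti, by rw [hFG]; exact hmono, ?_⟩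
  intro p hp hne
  rw [hpt, hpt]
  rcases lt_or_gt_of_ne hne with h | h
  · exact hanti ⟨hp, le_of_lt h⟩ ⟨hpstar, le_refl _⟩ h
  · exact hmono (le_refl pstar) (le_of_lt h) h
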